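/- Let V : [0, ∞) → [0, ∞) be a locally bounded function, σ of class KL with σ(s, 0) = s for all s ≥ 0, a : [0, ∞) → [0, ∞) continuous non-decreasing with a(0) = 0 and a(s) < s for all s > 0, and w : [0, ∞) → [0, ∞) locally bounded. If for all t ≥ 0 the inequality V(t) ≤ max{ σ(V(0), t), a( sup_{0 ≤ s ≤ t} V(s) ), sup_{0 ≤ s ≤ t} w(s) } holds, then for all t ≥ 0 one has V(t) ≤ max{ V(0), sup_{0 ≤ s ≤ t} w(s) }. -/

import Mathlib

/-- A function `γ : [0,∞) → [0,∞)` is of class `K` if it is continuous,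
strictly increasing and `γ 0 = 0`. -/
def ClassK (γ : ℝ → ℝ) : Prop :=
  ContinuousOn γ (Set.Ici 0) ∧ StrictMonoOn γ (Set.Ici 0) ∧ γ 0 = 0

/-- A function `σ : [0,∞) × [0,∞) → [0,∞)` is of class `KL` if it is continuous,
for each fixed `t ≥ 0` the map `s ↦ σ s t` is of class `K`, and for each fixed `s ≥ 0`
the map `t ↦ σ s t` is non-increasing with `σ s t → 0` as `t → +∞`. -/
def ClassKL (σ : ℝ → ℝ → ℝ) : Prop :=
  ContinuousOn (fun p : ℝ × ℝ => σ p.1 p.2) (Set.Ici 0 ×ˢ Set.Ici 0) ∧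
  (∀ t ∈ Set.Ici (0:ℝ), ClassK (fun s => σ s t)) ∧
  (∀ s ∈ Set.Ici (0:ℝ), AntitoneOn (σ s) (Set.Ici 0) ∧
    Filter.Tendsto (σ s) Filter.atTop (nhds 0)) ∧
  (∀ s ∈ Set.Ici (0:ℝ), ∀ t ∈ Set.Ici (0:ℝ), 0 ≤ σ s t)

/-- Absolute continuity of `y` on the interval `[a, b]`. -/
def AbsContOn {E : Type*} [NormedAddCommGroup E] (y : ℝ → E) (a b : ℝ) : Prop :=
  ∀ ε > (0:ℝ), ∃ δ > (0:ℝ), ∀ n : ℕ, ∀ s t : ℕ → ℝ,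
    (∀ i < n, a ≤ s i ∧ s i ≤ t i ∧ t i ≤ b) →
    (∀ i, i + 1 < n → t i ≤ s (i + 1)) →
    (∑ i ∈ Finset.range n, (t i - s i)) < δ →
    (∑ i ∈ Finset.range n, ‖y (t i) - y (s i)‖) < ε

/-- The step from inequality (3.7) to inequality (3.9) in the proof of Theorem 3.1:
if `V : [0,∞) → [0,∞)` is locally bounded, `σ` is of class `KL` with `σ(s,0) = s`,
`a : [0,∞) → [0,∞)` is continuous non-decreasing with `a 0 = 0` and `a s < s` for
`s > 0`, `w : [0,∞) → [0,∞)` is locally bounded, and for all `t ≥ 0`,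
`V t ≤ max { σ(V 0, t), a(sup_{0 ≤ s ≤ t} V s), sup_{0 ≤ s ≤ t} w s }`, then
`V t ≤ max { V 0, sup_{0 ≤ s ≤ t} w s }` for all `t ≥ 0`. -/
theorem stmt_3 (V w : ℝ → ℝ) (σ : ℝ → ℝ → ℝ) (a : ℝ → ℝ)
    (hVnn : ∀ t ≥ (0:ℝ), 0 ≤ V t)
    (hVb : ∀ b : ℝ, ∃ C, ∀ t ∈ Set.Icc (0:ℝ) b, V t ≤ C)
    (hσ : ClassKL σ) (hσ0 : ∀ s ≥ (0:ℝ), σ s 0 = s)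
    (hac : ContinuousOn a (Set.Ici 0)) (hamono : MonotoneOn a (Set.Ici 0))
    (ha0 : a 0 = 0) (hann : ∀ s ≥ (0:ℝ), 0 ≤ a s) (ha : ∀ s > (0:ℝ), a s < s)
    (hwnn : ∀ t ≥ (0:ℝ), 0 ≤ w t)
    (hwb : ∀ b : ℝ, ∃ C, ∀ t ∈ Set.Icc (0:ℝ) b, w t ≤ C)
    (h : ∀ t ≥ (0:ℝ), V t ≤ max (σ (V 0) t)
      (max (a (sSup (V '' Set.Icc 0 t))) (sSup (w '' Set.Icc 0 t)))) :
    ∀ t ≥ (0:ℝ), V t ≤ max (V 0) (sSup (w '' Set.Icc 0 t)) := by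
  intro t ht
  have hV0 : (0:ℝ) ≤ V 0 := hVnn 0 le_rfl
  obtain ⟨C, hC⟩ := hVb t
  obtain ⟨D, hD⟩ := hwb t
  have hVbdd : BddAbove (V '' Set.Icc 0 t) := ⟨C, by rintro x ⟨s, hs, rfl⟩; exact hC s hs⟩
  have hwbdd : BddAbove (w '' Set.Icc 0 t) := ⟨D, by rintro x ⟨s, hs, rfl⟩; exact hD s hs⟩
  have h0mem : (0:ℝ) ∈ Set.Icc (0:ℝ) t := ⟨le_rfl, ht⟩
  set S := sSup (V '' Set.Icc 0 t) with hSdef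
  set W := sSup (w '' Set.Icc 0 t) with hWdef
  have hVleS : ∀ s ∈ Set.Icc (0:ℝ) t, V s ≤ S := fun s hs =>
    le_csSup hVbdd ⟨s, hs, rfl⟩
  have hS0 : 0 ≤ S := le_trans (hVnn 0 le_rfl) (hVleS 0 h0mem)
  have hW0 : 0 ≤ W := le_trans (hwnn 0 le_rfl) (le_csSup hwbdd ⟨0, h0mem, rfl⟩)
  -- key: S ≤ max (V 0) (max (a S) W)
  have key : S ≤ max (V 0) (max (a S) W) := by
    refine csSup_le ⟨V 0, 0, h0mem, rfl⟩ ?_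
    rintro x ⟨s, hs, rfl⟩
    have hs0 : (0:ℝ) ≤ s := hs.1
    have hsub : Set.Icc (0:ℝ) s ⊆ Set.Icc 0 t := Set.Icc_subset_Icc le_rfl hs.2
    have hSs : sSup (V '' Set.Icc 0 s) ≤ S :=
      csSup_le_csSup hVbdd ⟨V 0, 0, ⟨le_rfl, hs0⟩, rfl⟩ (Set.image_mono hsub)
    have hSs0 : 0 ≤ sSup (V '' Set.Icc 0 s) := by
      refine le_trans (hVnn 0 le_rfl) (le_csSup ?_ ⟨0, ⟨le_rfl, hs0⟩, rfl⟩)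
      exact hVbdd.mono (Set.image_mono hsub)
    have hWs : sSup (w '' Set.Icc 0 s) ≤ W :=
      csSup_le_csSup hwbdd ⟨w 0, 0, ⟨le_rfl, hs0⟩, rfl⟩ (Set.image_mono hsub)
    have hσle : σ (V 0) s ≤ V 0 := by
      have := (hσ.2.2.1 (V 0) hV0).1 (Set.self_mem_Ici) hs0 hs0
      rwa [hσ0 (V 0) hV0] at this
    have hale : a (sSup (V '' Set.Icc 0 s)) ≤ a S := hamono hSs0 hS0 hSs
    have := h s hs0
    refine this.trans (max_le_max hσle (max_le_max hale hWs))
  have hStle : V t ≤ S := hVleS t ⟨ht, le_rfl⟩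
  by_cases hS : S ≤ max (V 0) W
  · exact hStle.trans hS
  · exfalso
    push_neg at hS
    have h1 : V 0 < S := lt_of_le_of_lt (le_max_left _ _) hS
    have h2 : W < S := lt_of_le_of_lt (le_max_right _ _) hS
    have hSpos : 0 < S := lt_of_le_of_lt hV0 h1
    have haS : a S < S := ha S hSpos
    have : max (V 0) (max (a S) W) < S := by
      exact max_lt h1 (max_lt haS h2)
    exact absurd key (not_le.mpr this)
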